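/- Let H be a real inner product space and let c, K₀, K₁ ≥ 0. Then there exists c' ≥ 0, depending only on c, K₀ and K₁, with the following property: for every N ∈ ℕ and all finite sequences v⁰, v¹, …, v^N and z⁰, z¹, …, z^N in H such that ‖v⁰‖ ≤ K₀, ‖z⁰‖ + Σ_{i=1}^{N} ‖zⁱ − z^{i−1}‖ ≤ K₁, and ‖v^m‖² ≤ c + c·Σ_{i=1}^{m} ⟨zⁱ, vⁱ − v^{i−1}⟩ for every m = 1, …, N, one has ‖v^m‖ ≤ c' for every m = 0, 1, …, N. -/

import Mathlib

lemma abel_sum' {H : Type*} [NormedAddCommGroup H] [InnerProductSpace ℝ H]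
    (v z : ℕ → H) (m : ℕ) :
    ∑ i ∈ Finset.Icc 1 (m+1), (inner ℝ (z i) (v i - v (i - 1)) : ℝ)
      = inner ℝ (z (m+1)) (v (m+1)) - inner ℝ (z 1) (v 0)
        - ∑ i ∈ Finset.Icc 2 (m+1), (inner ℝ (z i - z (i-1)) (v (i-1)) : ℝ) := by
  induction m with
  | zero => simp [inner_sub_right]
  | succ m ih =>
      rw [Finset.sum_Icc_succ_top (by omega : 1 ≤ m+2),
        Finset.sum_Icc_succ_top (by omega : 2 ≤ m+2), ih]
      simp only [Nat.add_sub_cancel]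
      simp only [inner_sub_right, inner_sub_left]
      ring

theorem stmt_4 {H : Type*} [NormedAddCommGroup H] [InnerProductSpace ℝ H]
    (c K₀ K₁ : ℝ) (hc : 0 ≤ c) (hK₀ : 0 ≤ K₀) (hK₁ : 0 ≤ K₁) :
    ∃ c' : ℝ, 0 ≤ c' ∧ ∀ (N : ℕ) (v z : ℕ → H),
      ‖v 0‖ ≤ K₀ →
      ‖z 0‖ + ∑ i ∈ Finset.Icc 1 N, ‖z i - z (i - 1)‖ ≤ K₁ →
      (∀ m : ℕ, 1 ≤ m → m ≤ N →
        ‖v m‖ ^ 2 ≤ c + c * ∑ i ∈ Finset.Icc 1 m, (inner ℝ (z i) (v i - v (i - 1)) : ℝ)) →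
      ∀ m : ℕ, m ≤ N → ‖v m‖ ≤ c' := by
  set A := c + c * K₁ * K₀ + K₀ ^ 2 with hAdef
  have hA0 : 0 ≤ A := by positivity
  refine ⟨2 * c * K₁ + Real.sqrt A, by positivity, ?_⟩
  intro N v z hv0 hz hrec
  have hsA : Real.sqrt A ^ 2 = A := Real.sq_sqrt hA0
  have hsA0 : 0 ≤ Real.sqrt A := Real.sqrt_nonneg A
  have hne : (Finset.range (N+1)).Nonempty := ⟨0, by simp⟩
  set M := (Finset.range (N+1)).sup' hne (fun i => ‖v i‖) with hMdef
  have hMge : ∀ i, i ≤ N → ‖v i‖ ≤ M := fun i hi =>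
    Finset.le_sup' (fun i => ‖v i‖) (Finset.mem_range.2 (Nat.lt_succ_of_le hi))
  have hM0 : 0 ≤ M := le_trans (norm_nonneg (v 0)) (hMge 0 (by omega))
  suffices hMle : M ≤ 2 * c * K₁ + Real.sqrt A by
    intro k hk; exact (hMge k hk).trans hMle
  obtain ⟨m, hm, hmeq⟩ := Finset.exists_mem_eq_sup' hne (fun i => ‖v i‖)
  have hmN : m ≤ N := by have := Finset.mem_range.1 hm; omega
  -- total variation bound
  have hTVnn : ∀ (s : Finset ℕ), 0 ≤ ∑ i ∈ s, ‖z i - z (i-1)‖ :=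
    fun s => Finset.sum_nonneg (fun i _ => norm_nonneg _)
  have hTV : ∑ i ∈ Finset.Icc 1 N, ‖z i - z (i - 1)‖ ≤ K₁ := by
    have := norm_nonneg (z 0); linarith
  have hzb : ∀ j, j ≤ N → ‖z j‖ ≤ K₁ := by
    intro j hj
    have key : ∀ j, ‖z j‖ ≤ ‖z 0‖ + ∑ i ∈ Finset.Icc 1 j, ‖z i - z (i-1)‖ := by
      intro j
      induction j with
      | zero => simp
      | succ j ih =>
          rw [Finset.sum_Icc_succ_top (by omega : 1 ≤ j+1)]
          have : ‖z (j+1)‖ ≤ ‖z j‖ + ‖z (j+1) - z ((j+1)-1)‖ := by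
            simp only [Nat.add_sub_cancel]
            calc ‖z (j+1)‖ = ‖z j + (z (j+1) - z j)‖ := by congr 1; abel
              _ ≤ ‖z j‖ + ‖z (j+1) - z j‖ := norm_add_le _ _
          linarith
    have hsub : ∑ i ∈ Finset.Icc 1 j, ‖z i - z (i-1)‖
        ≤ ∑ i ∈ Finset.Icc 1 N, ‖z i - z (i-1)‖ :=
      Finset.sum_le_sum_of_subset_of_nonneg
        (Finset.Icc_subset_Icc_right hj) (fun i _ _ => norm_nonneg _)
    calc ‖z j‖ ≤ _ := key j
      _ ≤ ‖z 0‖ + ∑ i ∈ Finset.Icc 1 N, ‖z i - z (i-1)‖ := by linarith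
      _ ≤ K₁ := hz
  -- main case split
  rcases Nat.eq_zero_or_pos m with hm0 | hm1
  · -- M = ‖v 0‖ ≤ K₀ ≤ √A
    have h2cK : 0 ≤ 2 * c * K₁ := by positivity
    calc M = ‖v m‖ := hmeq
      _ ≤ K₀ := by rw [hm0]; exact hv0
      _ = Real.sqrt (K₀ ^ 2) := (Real.sqrt_sq hK₀).symm
      _ ≤ Real.sqrt A := Real.sqrt_le_sqrt (by nlinarith)
      _ ≤ 2 * c * K₁ + Real.sqrt A := by linarith
  · obtain ⟨k, rfl⟩ : ∃ k, m = k + 1 := ⟨m - 1, by omega⟩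
    have hrec' := hrec (k+1) (by omega) hmN
    rw [abel_sum'] at hrec'
    have h1 : (inner ℝ (z (k+1)) (v (k+1)) : ℝ) ≤ K₁ * M := by
      calc (inner ℝ (z (k+1)) (v (k+1)) : ℝ) ≤ ‖z (k+1)‖ * ‖v (k+1)‖ :=
            real_inner_le_norm _ _
        _ ≤ K₁ * M := by
            apply mul_le_mul (hzb _ hmN) (hMge _ hmN) (norm_nonneg _) hK₁
    have h2 : -(inner ℝ (z 1) (v 0) : ℝ) ≤ K₁ * K₀ := by
      have := real_inner_le_norm (z 1) (-(v 0))
      rw [inner_neg_right, norm_neg] at this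
      calc -(inner ℝ (z 1) (v 0) : ℝ) ≤ ‖z 1‖ * ‖v 0‖ := by linarith
        _ ≤ K₁ * K₀ := mul_le_mul (hzb 1 (by omega)) hv0 (norm_nonneg _) hK₁
    have h3 : -(∑ i ∈ Finset.Icc 2 (k+1), (inner ℝ (z i - z (i-1)) (v (i-1)) : ℝ))
        ≤ K₁ * M := by
      have hterm : ∀ i ∈ Finset.Icc 2 (k+1),
          -(inner ℝ (z i - z (i-1)) (v (i-1)) : ℝ) ≤ ‖z i - z (i-1)‖ * M := by
        intro i hi
        simp only [Finset.mem_Icc] at hi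
        have := real_inner_le_norm (z i - z (i-1)) (-(v (i-1)))
        rw [inner_neg_right, norm_neg] at this
        calc -(inner ℝ (z i - z (i-1)) (v (i-1)) : ℝ) ≤ ‖z i - z (i-1)‖ * ‖v (i-1)‖ := by
              linarith
          _ ≤ ‖z i - z (i-1)‖ * M :=
              mul_le_mul_of_nonneg_left (hMge _ (by omega)) (norm_nonneg _)
      calc -(∑ i ∈ Finset.Icc 2 (k+1), (inner ℝ (z i - z (i-1)) (v (i-1)) : ℝ))
          = ∑ i ∈ Finset.Icc 2 (k+1), -(inner ℝ (z i - z (i-1)) (v (i-1)) : ℝ) := by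
            rw [Finset.sum_neg_distrib]
        _ ≤ ∑ i ∈ Finset.Icc 2 (k+1), ‖z i - z (i-1)‖ * M :=
            Finset.sum_le_sum hterm
        _ = (∑ i ∈ Finset.Icc 2 (k+1), ‖z i - z (i-1)‖) * M := by
            rw [Finset.sum_mul]
        _ ≤ (∑ i ∈ Finset.Icc 1 N, ‖z i - z (i-1)‖) * M := by
            apply mul_le_mul_of_nonneg_right _ hM0
            exact Finset.sum_le_sum_of_subset_of_nonneg
              (Finset.Icc_subset_Icc (by omega) hmN) (fun i _ _ => norm_nonneg _)
        _ ≤ K₁ * M := mul_le_mul_of_nonneg_right hTV hM0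
    have hMeq' : ‖v (k+1)‖ = M := hmeq.symm
    have hsum : (inner ℝ (z (k+1)) (v (k+1)) : ℝ) - inner ℝ (z 1) (v 0)
        - ∑ i ∈ Finset.Icc 2 (k+1), (inner ℝ (z i - z (i-1)) (v (i-1)) : ℝ)
        ≤ K₁ * M + K₁ * K₀ + K₁ * M := by linarith
    have hmul := mul_le_mul_of_nonneg_left hsum hc
    have hMsq : M ^ 2 ≤ c + c * (K₁ * M + K₁ * K₀ + K₁ * M) := by
      have hv2 : ‖v (k+1)‖ ^ 2 = M ^ 2 := by rw [hMeq']
      linarith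
    by_contra hcon
    push_neg at hcon
    have hMpos : 0 < M := lt_of_le_of_lt (by positivity) hcon
    have h5 : (2 * c * K₁ + Real.sqrt A) * M < M * M :=
      mul_lt_mul_of_pos_right hcon hMpos
    have h6 : Real.sqrt A * (2 * c * K₁ + Real.sqrt A) ≤ Real.sqrt A * M :=
      mul_le_mul_of_nonneg_left hcon.le hsA0
    nlinarith [h5, h6, hsA, hMsq, mul_nonneg (mul_nonneg hc hK₁) hsA0,
      sq_nonneg K₀, pow_two M]
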